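/- Let H be a real Hilbert space, d ∈ ℕ, and let X¹, X² : Ω → H and h¹, h² : Ω → ℝ^d be strongly measurable random variables on a probability space, all square-integrable. Define Cov[X,h] : ℝ^d → H by y ↦ E[⟨h − E[h], y⟩ (X − E[X])]. Then ‖Cov[X¹,h¹] − Cov[X²,h²]‖ ≤ √(E[‖X¹ − X²‖²]) · √(E[‖h¹ − E[h¹]‖²]) + √(E[‖X² − E[X²]‖²]) · √(E[‖h¹ − h²‖²]), where ‖·‖ denotes the operator norm. -/

import Mathlib

open MeasureTheory RealInnerProductSpace

private lemma rpow_two_eq {x : ℝ} : x ^ (2:ℝ) = x ^ 2 := by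
  rw [show (2:ℝ) = ((2:ℕ):ℝ) by norm_num, Real.rpow_natCast]

private lemma cs_smul {Ω : Type*} [MeasurableSpace Ω] {μ : Measure Ω}
    {H : Type*} [NormedAddCommGroup H] [InnerProductSpace ℝ H] [CompleteSpace H]
    {f : Ω → ℝ} {g : Ω → H} (hf : MemLp f 2 μ) (hg : MemLp g 2 μ) :
    ‖∫ ω, f ω • g ω ∂μ‖ ≤ Real.sqrt (∫ ω, f ω ^ 2 ∂μ) * Real.sqrt (∫ ω, ‖g ω‖ ^ 2 ∂μ) := by
  have hpq : Real.HolderConjugate 2 2 := Real.HolderConjugate.two_two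
  have hof : (ENNReal.ofReal 2 : ENNReal) = 2 := by norm_num
  have h2 := integral_mul_le_Lp_mul_Lq_of_nonneg (μ := μ) hpq
    (Filter.Eventually.of_forall fun ω => norm_nonneg (f ω))
    (Filter.Eventually.of_forall fun ω => norm_nonneg (g ω))
    (hof ▸ hf.norm) (hof ▸ hg.norm)
  have ef : (∫ ω, ‖f ω‖ ^ (2:ℝ) ∂μ) = ∫ ω, f ω ^ 2 ∂μ := by
    refine integral_congr_ae (Filter.Eventually.of_forall fun ω => ?_)
    simp only [rpow_two_eq, sq_abs, Real.norm_eq_abs]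
  have eg : (∫ ω, ‖g ω‖ ^ (2:ℝ) ∂μ) = ∫ ω, ‖g ω‖ ^ 2 ∂μ := by
    refine integral_congr_ae (Filter.Eventually.of_forall fun ω => ?_)
    simp only [rpow_two_eq]
  calc ‖∫ ω, f ω • g ω ∂μ‖ ≤ ∫ ω, ‖f ω • g ω‖ ∂μ := norm_integral_le_integral_norm _
    _ = ∫ ω, ‖f ω‖ * ‖g ω‖ ∂μ := by
        refine integral_congr_ae (Filter.Eventually.of_forall fun ω => ?_)
        simp [norm_smul]
    _ ≤ (∫ ω, ‖f ω‖ ^ (2:ℝ) ∂μ) ^ (1/2:ℝ) * (∫ ω, ‖g ω‖ ^ (2:ℝ) ∂μ) ^ (1/2:ℝ) := h2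
    _ = Real.sqrt (∫ ω, f ω ^ 2 ∂μ) * Real.sqrt (∫ ω, ‖g ω‖ ^ 2 ∂μ) := by
        rw [ef, eg, Real.sqrt_eq_rpow, Real.sqrt_eq_rpow]

private lemma var_le {Ω : Type*} [MeasurableSpace Ω] {μ : Measure Ω} [IsProbabilityMeasure μ]
    {E : Type*} [NormedAddCommGroup E] [InnerProductSpace ℝ E] [CompleteSpace E]
    {Z : Ω → E} (hZ : MemLp Z 2 μ) :
    ∫ ω, ‖Z ω - (∫ ω', Z ω' ∂μ)‖ ^ 2 ∂μ ≤ ∫ ω, ‖Z ω‖ ^ 2 ∂μ := by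
  set c := ∫ ω', Z ω' ∂μ with hc
  have hZi : Integrable Z μ := hZ.integrable one_le_two
  have hZ2 : Integrable (fun ω => ‖Z ω‖ ^ 2) μ :=
    (memLp_two_iff_integrable_sq_norm hZ.aestronglyMeasurable).mp hZ
  have hinner : Integrable (fun ω => 2 * (⟪Z ω, c⟫ : ℝ)) μ := (hZi.inner_const c).const_mul 2
  have hsub : Integrable (fun ω => ‖Z ω‖ ^ 2 - 2 * (⟪Z ω, c⟫ : ℝ)) μ := hZ2.sub hinner
  have hii : ∫ ω, (⟪Z ω, c⟫ : ℝ) ∂μ = ‖c‖ ^ 2 := by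
    have : ∀ ω, (⟪Z ω, c⟫ : ℝ) = ⟪c, Z ω⟫ := fun ω => real_inner_comm _ _
    rw [integral_congr_ae (Filter.Eventually.of_forall this), integral_inner hZi,
      ← hc, real_inner_self_eq_norm_sq]
  have hsq : ∫ ω, ‖Z ω - c‖ ^ 2 ∂μ = (∫ ω, ‖Z ω‖ ^ 2 ∂μ) - ‖c‖ ^ 2 := by
    have key : ∀ ω, ‖Z ω - c‖ ^ 2
        = (‖Z ω‖ ^ 2 - 2 * (⟪Z ω, c⟫ : ℝ)) + ‖c‖ ^ 2 :=
      fun ω => norm_sub_sq_real _ _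
    rw [integral_congr_ae (Filter.Eventually.of_forall key),
      integral_add hsub (integrable_const _),
      integral_sub hZ2 hinner, MeasureTheory.integral_const_mul, hii, integral_const]
    simp
    ring
  rw [hsq]
  nlinarith [sq_nonneg ‖c‖]

/-- Lipschitz bound for the difference of two covariance operators
`Cov[X,h] : ℝ^d → H`, `y ↦ E[⟨h − E[h], y⟩ (X − E[X])]`:
`‖Cov[X¹,h¹] − Cov[X²,h²]‖ ≤ √(E[‖X¹ − X²‖²])·√(E[‖h¹ − E h¹‖²])
  + √(E[‖X² − E X²‖²])·√(E[‖h¹ − h²‖²])`. -/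
theorem covOp_difference_bound
    {H : Type*} [NormedAddCommGroup H] [InnerProductSpace ℝ H] [CompleteSpace H]
    {Ω : Type*} [MeasurableSpace Ω] {μ : Measure Ω} [IsProbabilityMeasure μ]
    {d : ℕ} {X₁ X₂ : Ω → H} {h₁ h₂ : Ω → EuclideanSpace ℝ (Fin d)}
    (hX₁m : StronglyMeasurable X₁) (hX₂m : StronglyMeasurable X₂)
    (hh₁m : StronglyMeasurable h₁) (hh₂m : StronglyMeasurable h₂)
    (hX₁2 : Integrable (fun ω => ‖X₁ ω‖ ^ 2) μ)
    (hX₂2 : Integrable (fun ω => ‖X₂ ω‖ ^ 2) μ)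
    (hh₁2 : Integrable (fun ω => ‖h₁ ω‖ ^ 2) μ)
    (hh₂2 : Integrable (fun ω => ‖h₂ ω‖ ^ 2) μ)
    (C₁ C₂ : EuclideanSpace ℝ (Fin d) →L[ℝ] H)
    (hC₁ : ∀ y, C₁ y = ∫ ω,
      (⟪h₁ ω - (∫ ω', h₁ ω' ∂μ), y⟫ : ℝ) • (X₁ ω - (∫ ω', X₁ ω' ∂μ)) ∂μ)
    (hC₂ : ∀ y, C₂ y = ∫ ω,
      (⟪h₂ ω - (∫ ω', h₂ ω' ∂μ), y⟫ : ℝ) • (X₂ ω - (∫ ω', X₂ ω' ∂μ)) ∂μ) :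
    ‖C₁ - C₂‖
      ≤ Real.sqrt (∫ ω, ‖X₁ ω - X₂ ω‖ ^ 2 ∂μ)
          * Real.sqrt (∫ ω, ‖h₁ ω - (∫ ω', h₁ ω' ∂μ)‖ ^ 2 ∂μ)
        + Real.sqrt (∫ ω, ‖X₂ ω - (∫ ω', X₂ ω' ∂μ)‖ ^ 2 ∂μ)
          * Real.sqrt (∫ ω, ‖h₁ ω - h₂ ω‖ ^ 2 ∂μ) := by
  have hX₁L : MemLp X₁ 2 μ :=
    (memLp_two_iff_integrable_sq_norm hX₁m.aestronglyMeasurable).mpr hX₁2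
  have hX₂L : MemLp X₂ 2 μ :=
    (memLp_two_iff_integrable_sq_norm hX₂m.aestronglyMeasurable).mpr hX₂2
  have hh₁L : MemLp h₁ 2 μ :=
    (memLp_two_iff_integrable_sq_norm hh₁m.aestronglyMeasurable).mpr hh₁2
  have hh₂L : MemLp h₂ 2 μ :=
    (memLp_two_iff_integrable_sq_norm hh₂m.aestronglyMeasurable).mpr hh₂2
  set mX₁ := ∫ ω', X₁ ω' ∂μ with hmX₁
  set mX₂ := ∫ ω', X₂ ω' ∂μ with hmX₂
  set mh₁ := ∫ ω', h₁ ω' ∂μ with hmh₁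
  set mh₂ := ∫ ω', h₂ ω' ∂μ with hmh₂
  have hcX₁ : MemLp (fun ω => X₁ ω - mX₁) 2 μ := hX₁L.sub (memLp_const _)
  have hcX₂ : MemLp (fun ω => X₂ ω - mX₂) 2 μ := hX₂L.sub (memLp_const _)
  have hch₁ : MemLp (fun ω => h₁ ω - mh₁) 2 μ := hh₁L.sub (memLp_const _)
  have hch₂ : MemLp (fun ω => h₂ ω - mh₂) 2 μ := hh₂L.sub (memLp_const _)
  have hX12 : MemLp (fun ω => X₁ ω - X₂ ω) 2 μ := hX₁L.sub hX₂L
  have hh12 : MemLp (fun ω => h₁ ω - h₂ ω) 2 μ := hh₁L.sub hh₂L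
  have hone : (1:ENNReal)/1 = 1/2 + 1/2 := by
    rw [one_div, one_div, inv_one, ENNReal.inv_two_add_inv_two]
  -- nonnegativity of square integrals
  have intsq_nonneg : ∀ (F : Ω → ℝ), (0:ℝ) ≤ ∫ ω, F ω ^ 2 ∂μ :=
    fun F => integral_nonneg fun ω => sq_nonneg _
  -- variance bounds
  have hvarX : ∫ ω, ‖(X₁ ω - mX₁) - (X₂ ω - mX₂)‖ ^ 2 ∂μ
      ≤ ∫ ω, ‖X₁ ω - X₂ ω‖ ^ 2 ∂μ := by
    have hmean : mX₁ - mX₂ = ∫ ω', (X₁ ω' - X₂ ω') ∂μ :=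
      (integral_sub (hX₁L.integrable one_le_two) (hX₂L.integrable one_le_two)).symm
    have : ∀ ω, (X₁ ω - mX₁) - (X₂ ω - mX₂)
        = (X₁ ω - X₂ ω) - (∫ ω', (X₁ ω' - X₂ ω') ∂μ) := by
      intro ω; rw [← hmean]; abel
    calc ∫ ω, ‖(X₁ ω - mX₁) - (X₂ ω - mX₂)‖ ^ 2 ∂μ
        = ∫ ω, ‖(X₁ ω - X₂ ω) - (∫ ω', (X₁ ω' - X₂ ω') ∂μ)‖ ^ 2 ∂μ := by
          exact integral_congr_ae (Filter.Eventually.of_forall fun ω => by simp only [this ω])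
      _ ≤ ∫ ω, ‖X₁ ω - X₂ ω‖ ^ 2 ∂μ := var_le hX12
  have hvarh : ∫ ω, ‖(h₁ ω - mh₁) - (h₂ ω - mh₂)‖ ^ 2 ∂μ
      ≤ ∫ ω, ‖h₁ ω - h₂ ω‖ ^ 2 ∂μ := by
    have hmean : mh₁ - mh₂ = ∫ ω', (h₁ ω' - h₂ ω') ∂μ :=
      (integral_sub (hh₁L.integrable one_le_two) (hh₂L.integrable one_le_two)).symm
    have : ∀ ω, (h₁ ω - mh₁) - (h₂ ω - mh₂)
        = (h₁ ω - h₂ ω) - (∫ ω', (h₁ ω' - h₂ ω') ∂μ) := by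
      intro ω; rw [← hmean]; abel
    calc ∫ ω, ‖(h₁ ω - mh₁) - (h₂ ω - mh₂)‖ ^ 2 ∂μ
        = ∫ ω, ‖(h₁ ω - h₂ ω) - (∫ ω', (h₁ ω' - h₂ ω') ∂μ)‖ ^ 2 ∂μ := by
          exact integral_congr_ae (Filter.Eventually.of_forall fun ω => by simp only [this ω])
      _ ≤ ∫ ω, ‖h₁ ω - h₂ ω‖ ^ 2 ∂μ := var_le hh12
  refine ContinuousLinearMap.opNorm_le_bound _ (by positivity) fun y => ?_
  -- scalar factors
  have hf₁ : MemLp (fun ω => (⟪h₁ ω - mh₁, y⟫ : ℝ)) 2 μ := hch₁.inner_const y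
  have hf₂ : MemLp (fun ω => (⟪(h₁ ω - mh₁) - (h₂ ω - mh₂), y⟫ : ℝ)) 2 μ :=
    (hch₁.sub hch₂).inner_const y
  have hf₂' : MemLp (fun ω => (⟪h₂ ω - mh₂, y⟫ : ℝ)) 2 μ := hch₂.inner_const y
  -- integrable products
  have hi₁ : Integrable (fun ω => (⟪h₁ ω - mh₁, y⟫ : ℝ) • (X₁ ω - mX₁)) μ :=
    memLp_one_iff_integrable.mp (hcX₁.smul hf₁ (r := 1))
  have hi₂ : Integrable (fun ω => (⟪h₂ ω - mh₂, y⟫ : ℝ) • (X₂ ω - mX₂)) μ :=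
    memLp_one_iff_integrable.mp (hcX₂.smul hf₂' (r := 1))
  have hg₁ : Integrable
      (fun ω => (⟪h₁ ω - mh₁, y⟫ : ℝ) • ((X₁ ω - mX₁) - (X₂ ω - mX₂))) μ :=
    memLp_one_iff_integrable.mp ((hcX₁.sub hcX₂).smul hf₁ (r := 1))
  have hg₂ : Integrable
      (fun ω => (⟪(h₁ ω - mh₁) - (h₂ ω - mh₂), y⟫ : ℝ) • (X₂ ω - mX₂)) μ :=
    memLp_one_iff_integrable.mp (hcX₂.smul hf₂ (r := 1))
  -- decomposition of (C₁ - C₂) y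
  have hdecomp : (C₁ - C₂) y
      = (∫ ω, (⟪h₁ ω - mh₁, y⟫ : ℝ) • ((X₁ ω - mX₁) - (X₂ ω - mX₂)) ∂μ)
        + ∫ ω, (⟪(h₁ ω - mh₁) - (h₂ ω - mh₂), y⟫ : ℝ) • (X₂ ω - mX₂) ∂μ := by
    rw [ContinuousLinearMap.sub_apply, hC₁ y, hC₂ y, ← integral_add hg₁ hg₂,
      ← integral_sub hi₁ hi₂]
    refine integral_congr_ae (Filter.Eventually.of_forall fun ω => ?_)
    simp only [inner_sub_left, smul_sub, sub_smul]
    abel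
  -- bound first term
  have hb₁ : ‖∫ ω, (⟪h₁ ω - mh₁, y⟫ : ℝ) • ((X₁ ω - mX₁) - (X₂ ω - mX₂)) ∂μ‖
      ≤ (Real.sqrt (∫ ω, ‖h₁ ω - mh₁‖ ^ 2 ∂μ) * ‖y‖)
        * Real.sqrt (∫ ω, ‖X₁ ω - X₂ ω‖ ^ 2 ∂μ) := by
    refine (cs_smul hf₁ (hcX₁.sub hcX₂)).trans ?_
    refine mul_le_mul ?_ ?_ (Real.sqrt_nonneg _) (by positivity)
    · -- √(∫ ⟪h̄₁,y⟫²) ≤ √(∫‖h̄₁‖²) * ‖y‖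
      have hint₁ : Integrable (fun ω => (⟪h₁ ω - mh₁, y⟫ : ℝ) ^ 2) μ := by
        have := (memLp_two_iff_integrable_sq_norm hf₁.aestronglyMeasurable).mp hf₁
        simpa [Real.norm_eq_abs, sq_abs] using this
      have hint₂ : Integrable (fun ω => ‖h₁ ω - mh₁‖ ^ 2 * ‖y‖ ^ 2) μ :=
        ((memLp_two_iff_integrable_sq_norm hch₁.aestronglyMeasurable).mp hch₁).mul_const _
      have hmono : ∫ ω, (⟪h₁ ω - mh₁, y⟫ : ℝ) ^ 2 ∂μ
          ≤ ∫ ω, ‖h₁ ω - mh₁‖ ^ 2 * ‖y‖ ^ 2 ∂μ := by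
        refine integral_mono hint₁ hint₂ fun ω => ?_
        have h1 := abs_real_inner_le_norm (h₁ ω - mh₁) y
        nlinarith [abs_nonneg (⟪h₁ ω - mh₁, y⟫ : ℝ), sq_abs (⟪h₁ ω - mh₁, y⟫ : ℝ),
          norm_nonneg (h₁ ω - mh₁), norm_nonneg y]
      calc Real.sqrt (∫ ω, (⟪h₁ ω - mh₁, y⟫ : ℝ) ^ 2 ∂μ)
          ≤ Real.sqrt (∫ ω, ‖h₁ ω - mh₁‖ ^ 2 * ‖y‖ ^ 2 ∂μ) := Real.sqrt_le_sqrt hmono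
        _ = Real.sqrt (∫ ω, ‖h₁ ω - mh₁‖ ^ 2 ∂μ) * ‖y‖ := by
            rw [integral_mul_const, Real.sqrt_mul (intsq_nonneg _),
              Real.sqrt_sq (norm_nonneg y)]
    · exact Real.sqrt_le_sqrt hvarX
  -- bound second term
  have hb₂ : ‖∫ ω, (⟪(h₁ ω - mh₁) - (h₂ ω - mh₂), y⟫ : ℝ) • (X₂ ω - mX₂) ∂μ‖
      ≤ (Real.sqrt (∫ ω, ‖h₁ ω - h₂ ω‖ ^ 2 ∂μ) * ‖y‖)
        * Real.sqrt (∫ ω, ‖X₂ ω - mX₂‖ ^ 2 ∂μ) := by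
    refine (cs_smul hf₂ hcX₂).trans ?_
    refine mul_le_mul ?_ le_rfl (Real.sqrt_nonneg _) (by positivity)
    have hint₁ : Integrable (fun ω => (⟪(h₁ ω - mh₁) - (h₂ ω - mh₂), y⟫ : ℝ) ^ 2) μ := by
      have := (memLp_two_iff_integrable_sq_norm hf₂.aestronglyMeasurable).mp hf₂
      simpa [Real.norm_eq_abs, sq_abs] using this
    have hint₂ : Integrable (fun ω => ‖(h₁ ω - mh₁) - (h₂ ω - mh₂)‖ ^ 2 * ‖y‖ ^ 2) μ :=
      ((memLp_two_iff_integrable_sq_norm (hch₁.sub hch₂).aestronglyMeasurable).mp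
        (hch₁.sub hch₂)).mul_const _
    have hmono : ∫ ω, (⟪(h₁ ω - mh₁) - (h₂ ω - mh₂), y⟫ : ℝ) ^ 2 ∂μ
        ≤ ∫ ω, ‖(h₁ ω - mh₁) - (h₂ ω - mh₂)‖ ^ 2 * ‖y‖ ^ 2 ∂μ := by
      refine integral_mono hint₁ hint₂ fun ω => ?_
      have h1 := abs_real_inner_le_norm ((h₁ ω - mh₁) - (h₂ ω - mh₂)) y
      nlinarith [abs_nonneg (⟪(h₁ ω - mh₁) - (h₂ ω - mh₂), y⟫ : ℝ),
        sq_abs (⟪(h₁ ω - mh₁) - (h₂ ω - mh₂), y⟫ : ℝ),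
        norm_nonneg ((h₁ ω - mh₁) - (h₂ ω - mh₂)), norm_nonneg y]
    calc Real.sqrt (∫ ω, (⟪(h₁ ω - mh₁) - (h₂ ω - mh₂), y⟫ : ℝ) ^ 2 ∂μ)
        ≤ Real.sqrt (∫ ω, ‖(h₁ ω - mh₁) - (h₂ ω - mh₂)‖ ^ 2 * ‖y‖ ^ 2 ∂μ) :=
          Real.sqrt_le_sqrt hmono
      _ = Real.sqrt (∫ ω, ‖(h₁ ω - mh₁) - (h₂ ω - mh₂)‖ ^ 2 ∂μ) * ‖y‖ := by
          rw [integral_mul_const, Real.sqrt_mul (intsq_nonneg _),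
            Real.sqrt_sq (norm_nonneg y)]
      _ ≤ Real.sqrt (∫ ω, ‖h₁ ω - h₂ ω‖ ^ 2 ∂μ) * ‖y‖ :=
          mul_le_mul_of_nonneg_right (Real.sqrt_le_sqrt hvarh) (norm_nonneg y)
  calc ‖(C₁ - C₂) y‖
      ≤ ‖∫ ω, (⟪h₁ ω - mh₁, y⟫ : ℝ) • ((X₁ ω - mX₁) - (X₂ ω - mX₂)) ∂μ‖
        + ‖∫ ω, (⟪(h₁ ω - mh₁) - (h₂ ω - mh₂), y⟫ : ℝ) • (X₂ ω - mX₂) ∂μ‖ := by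
        rw [hdecomp]; exact norm_add_le _ _
    _ ≤ (Real.sqrt (∫ ω, ‖h₁ ω - mh₁‖ ^ 2 ∂μ) * ‖y‖)
          * Real.sqrt (∫ ω, ‖X₁ ω - X₂ ω‖ ^ 2 ∂μ)
        + (Real.sqrt (∫ ω, ‖h₁ ω - h₂ ω‖ ^ 2 ∂μ) * ‖y‖)
          * Real.sqrt (∫ ω, ‖X₂ ω - mX₂‖ ^ 2 ∂μ) := add_le_add hb₁ hb₂
    _ = (Real.sqrt (∫ ω, ‖X₁ ω - X₂ ω‖ ^ 2 ∂μ)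
          * Real.sqrt (∫ ω, ‖h₁ ω - mh₁‖ ^ 2 ∂μ)
        + Real.sqrt (∫ ω, ‖X₂ ω - mX₂‖ ^ 2 ∂μ)
          * Real.sqrt (∫ ω, ‖h₁ ω - h₂ ω‖ ^ 2 ∂μ)) * ‖y‖ := by ring
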